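/- Let K = F(√(-d)) with F ⊆ ℝ and a, b, d ∈ F positive, B = (a,b / K), and define the involution † on B by (w + x·i + y·j + z·ij)† = conj(w) + conj(x)·i + conj(y)·j - conj(z)·ij, where conj is the nontrivial K/F-automorphism (induced by √(-d) ↦ -√(-d)). Then under ρ_B : w + x·i + y·j + z·ij ↦ [[w - x√a, y√b - z√(ab)], [y√b + z√(ab), w + x√a]], one has ρ_B(q†) equal to the conjugate transpose of ρ_B(q) for all q ∈ B. -/

import Mathlib

open Quaternion Matrix

/-- The representation `ρ_B : (a,b/K) → M₂(ℂ)` for `K ⊆ ℂ`, with positive real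
square roots `√a, √b, √(ab)`. -/
noncomputable def rhoB (K : Subfield ℂ) (a b : ℝ) (c₁ c₂ : K)
    (q : ℍ[K, c₁, c₂]) : Matrix (Fin 2) (Fin 2) ℂ :=
  !![(q.re : ℂ) - (q.imI : ℂ) * (Real.sqrt a : ℂ),
      (q.imJ : ℂ) * (Real.sqrt b : ℂ) - (q.imK : ℂ) * (Real.sqrt (a * b) : ℂ);
    (q.imJ : ℂ) * (Real.sqrt b : ℂ) + (q.imK : ℂ) * (Real.sqrt (a * b) : ℂ),
      (q.re : ℂ) + (q.imI : ℂ) * (Real.sqrt a : ℂ)]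

/-- The involution `†` on `B = (a,b/K)` for a conjugation-closed subfield
`K ⊆ ℂ`: `(w + x·i + y·j + z·ij)† = conj w + conj x · i + conj y · j - conj z · ij`,
where `conj` is complex conjugation restricted to `K` (the nontrivial `K/F`
automorphism). -/
noncomputable def dagB (K : Subfield ℂ) (hconj : ∀ z ∈ K, starRingEnd ℂ z ∈ K) (c₁ c₂ : K)
    (q : ℍ[K, c₁, c₂]) : ℍ[K, c₁, c₂] :=
  ⟨⟨starRingEnd ℂ q.re, hconj _ q.re.2⟩, ⟨starRingEnd ℂ q.imI, hconj _ q.imI.2⟩,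
    ⟨starRingEnd ℂ q.imJ, hconj _ q.imJ.2⟩, -⟨starRingEnd ℂ q.imK, hconj _ q.imK.2⟩⟩

/-- For `K = F(√(-d))` with `F ⊆ ℝ` and `a, b, d ∈ F` positive, the involution
`†` on `B = (a,b/K)` corresponds under `ρ_B` to the conjugate transpose. -/
theorem stmt_19 (F : Subfield ℝ) (a b d : ℝ)
    (haF : a ∈ F) (hbF : b ∈ F) (hdF : d ∈ F)
    (ha : 0 < a) (hb : 0 < b) (hd : 0 < d)
    (K : Subfield ℂ)
    (hK : K = Subfield.closure
      ((Complex.ofRealHom '' (F : Set ℝ)) ∪ {Complex.I * (Real.sqrt d : ℂ)}))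
    (hconj : ∀ z ∈ K, starRingEnd ℂ z ∈ K)
    (haK : ((a : ℝ) : ℂ) ∈ K) (hbK : ((b : ℝ) : ℂ) ∈ K) :
    ∀ q : ℍ[K, ⟨(a : ℂ), haK⟩, ⟨(b : ℂ), hbK⟩],
      rhoB K a b _ _ (dagB K hconj _ _ q) = (rhoB K a b _ _ q)ᴴ := by
  intro q
  ext i j
  fin_cases i <;> fin_cases j <;>
    simp [rhoB, dagB, Matrix.conjTranspose_apply] <;> ring
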